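/- For every integer q ≥ 2 and every real α with α > √((ln q)/2), there exists a natural number N such that for all n ≥ N, (1/q − 2α/(q√n) − 2/(qn))^(n/2 − α√n) · (1/q + 2α/(q√n) + 2/(qn))^(n/2 + α√n) ≥ q^(−(n−1)). -/

import Mathlib

open Filter Real Topology

private lemma aux_one_sub_inv_le_log {x : ℝ} (hx : 0 < x) : 1 - 1/x ≤ Real.log x := by
  have h := Real.log_le_sub_one_of_pos (inv_pos.mpr hx)
  rw [Real.log_inv, one_div] at *
  linarith

/-- For every integer `q ≥ 2` and `α > √((ln q)/2)`, eventually
`(1/q - 2α/(q√n) - 2/(qn))^(n/2 - α√n) · (1/q + 2α/(q√n) + 2/(qn))^(n/2 + α√n) ≥ q^(-(n-1))`. -/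
theorem qary_interval_length_ge_one_symbol (q : ℕ) (hq : 2 ≤ q) (α : ℝ)
    (hα : Real.sqrt (Real.log q / 2) < α) :
    ∃ N : ℕ, ∀ n : ℕ, N ≤ n →
      (q : ℝ) ^ (-((n : ℝ) - 1)) ≤
        (1 / q - 2 * α / (q * Real.sqrt n) - 2 / (q * n)) ^ ((n : ℝ) / 2 - α * Real.sqrt n) *
          (1 / q + 2 * α / (q * Real.sqrt n) + 2 / (q * n)) ^ ((n : ℝ) / 2 + α * Real.sqrt n) := by
  have hq1 : (1:ℝ) < q := by exact_mod_cast lt_of_lt_of_le one_lt_two hq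
  have hq0 : (0:ℝ) < q := lt_trans one_pos hq1
  have hlogq0 : 0 < Real.log q := Real.log_pos hq1
  have hα0 : 0 < α := lt_trans (Real.sqrt_pos.mpr (by positivity)) hα
  have hlt : Real.log q < 2 * α ^ 2 := by
    have := (Real.sqrt_lt' hα0).mp hα
    linarith
  set d : ℕ → ℝ := fun n => 2*α/Real.sqrt n + 2/(n:ℝ) with hd
  -- basic limits
  have hinvsqrt : Tendsto (fun n : ℕ => 1/Real.sqrt n) atTop (𝓝 0) := by
    have h1 : Tendsto (fun n : ℕ => Real.sqrt n) atTop atTop := by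
      have h2 := (tendsto_rpow_atTop (by norm_num : (0:ℝ) < 1/2)).comp
        tendsto_natCast_atTop_atTop
      refine h2.congr fun n => ?_
      simp [Real.sqrt_eq_rpow, Function.comp]
    simpa [one_div, Pi.inv_def] using h1.inv_tendsto_atTop
  have hinv : Tendsto (fun n : ℕ => 1/(n:ℝ)) atTop (𝓝 0) :=
    tendsto_one_div_atTop_nhds_zero_nat
  have hδ : Tendsto d atTop (𝓝 0) := by
    have h := (hinvsqrt.const_mul (2*α)).add (hinv.const_mul 2)
    simp only [mul_zero, add_zero] at h
    refine h.congr fun n => ?_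
    simp [hd, div_eq_mul_inv]
  have h1lim : Tendsto (fun n : ℕ => 2*α + 2/Real.sqrt n) atTop (𝓝 (2*α)) := by
    have h := (tendsto_const_nhds (x := 2*α) (f := atTop (α := ℕ))).add (hinvsqrt.const_mul 2)
    simp only [mul_zero, add_zero] at h
    refine h.congr fun n => ?_
    simp [div_eq_mul_inv]
  set g : ℕ → ℝ := fun n =>
    -((2*α + 2/Real.sqrt n)^2) / (2*(1 - d n^2)) + 2*α*(2*α + 2/Real.sqrt n)/(1 + d n)
    with hgdef
  have hg : Tendsto g atTop (𝓝 (2*α^2)) := by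
    have hden1 : Tendsto (fun n : ℕ => 2*(1 - d n^2)) atTop (𝓝 2) := by
      have h := ((tendsto_const_nhds (x := (1:ℝ)) (f := atTop (α := ℕ))).sub
        (hδ.pow 2)).const_mul 2
      simpa using h
    have hden2 : Tendsto (fun n : ℕ => 1 + d n) atTop (𝓝 1) := by
      simpa using (tendsto_const_nhds (x := (1:ℝ)) (f := atTop (α := ℕ))).add hδ
    have h := ((h1lim.pow 2).neg.div hden1 (by norm_num)).add
      ((h1lim.const_mul (2*α)).div hden2 one_ne_zero)
    have : -((2*α)^2) / 2 + 2*α*(2*α)/1 = 2*α^2 := by ring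
    rw [this] at h
    exact h
  -- eventual facts
  have hev1 : ∀ᶠ n : ℕ in atTop, Real.log q < g n := hg.eventually (eventually_gt_nhds hlt)
  have hev2 : ∀ᶠ n : ℕ in atTop, d n < 1 := hδ.eventually (eventually_lt_nhds one_pos)
  have hev3 : ∀ᶠ n : ℕ in atTop, 1 ≤ n := eventually_ge_atTop 1
  rw [eventually_atTop] at hev1 hev2 hev3
  obtain ⟨N1, hN1⟩ := hev1
  obtain ⟨N2, hN2⟩ := hev2
  obtain ⟨N3, hN3⟩ := hev3
  refine ⟨max N1 (max N2 N3), fun n hn => ?_⟩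
  have hgn := hN1 n (le_trans (le_max_left _ _) hn)
  have hd1 := hN2 n (le_trans (le_trans (le_max_left _ _) (le_max_right _ _)) hn)
  have hn1 := hN3 n (le_trans (le_trans (le_max_right _ _) (le_max_right _ _)) hn)
  have hn0 : (0:ℝ) < n := by exact_mod_cast hn1
  set s := Real.sqrt n with hsdef
  have hs : 0 < s := Real.sqrt_pos.mpr hn0
  have hs2 : s^2 = n := Real.sq_sqrt hn0.le
  have hd0 : 0 < d n := by
    have : d n = 2*α/s + 2/(n:ℝ) := rfl
    rw [this]; positivity
  have h1δ : 0 < 1 - d n := by linarith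
  have h2δ : 0 < 1 + d n := by linarith
  have hA : 1/(q:ℝ) - 2*α/(q*s) - 2/(q*n) = (1 - d n)/q := by
    have : d n = 2*α/s + 2/(n:ℝ) := rfl
    rw [this]
    field_simp
    ring
  have hB : 1/(q:ℝ) + 2*α/(q*s) + 2/(q*n) = (1 + d n)/q := by
    have : d n = 2*α/s + 2/(n:ℝ) := rfl
    rw [this]
    field_simp
    ring
  rw [hA, hB]
  have hApos : (0:ℝ) < (1 - d n)/q := by positivity
  have hBpos : (0:ℝ) < (1 + d n)/q := by positivity
  rw [Real.rpow_def_of_pos hq0, Real.rpow_def_of_pos hApos, Real.rpow_def_of_pos hBpos,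
    ← Real.exp_add, Real.exp_le_exp, Real.log_div h1δ.ne' hq0.ne',
    Real.log_div h2δ.ne' hq0.ne']
  set L1 := Real.log (1 - d n) with hL1
  set L2 := Real.log (1 + d n) with hL2
  -- bound on the key combination
  have hsd : s * d n = 2*α + 2/s := by
    have : d n = 2*α/s + 2/(n:ℝ) := rfl
    rw [this, ← hs2]
    field_simp
  have hb1 : 1 - 1/((1 - d n)*(1 + d n)) ≤ L1 + L2 := by
    have h := aux_one_sub_inv_le_log (mul_pos h1δ h2δ)
    rwa [Real.log_mul h1δ.ne' h2δ.ne'] at h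
  have hb2 : 1 - (1 - d n)/(1 + d n) ≤ L2 - L1 := by
    have h := aux_one_sub_inv_le_log (div_pos h2δ h1δ)
    rwa [Real.log_div h2δ.ne' h1δ.ne', one_div_div] at h
  have hgval : g n = (n:ℝ)/2 * (1 - 1/((1 - d n)*(1 + d n))) + α*s*(1 - (1 - d n)/(1 + d n)) := by
    have hne1 : ((1:ℝ) - d n) ≠ 0 := h1δ.ne'
    have hne2 : ((1:ℝ) + d n) ≠ 0 := h2δ.ne'
    have hne3 : (1:ℝ) - d n^2 ≠ 0 := by
      have h : (1:ℝ) - d n^2 = (1 - d n)*(1+d n) := by ring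
      rw [h]; exact mul_ne_zero hne1 hne2
    have e1 : g n = -((s*d n)^2)/(2*(1 - d n^2)) + 2*α*(s*d n)/(1+d n) := by
      simp only [hgdef]
      rw [← hsd]
    rw [e1, ← hs2]
    field_simp
    ring
  have key : Real.log q ≤ (n:ℝ)/2 * (L1 + L2) + α*s*(L2 - L1) := by
    have k1 : (n:ℝ)/2 * (1 - 1/((1 - d n)*(1 + d n))) ≤ (n:ℝ)/2 * (L1 + L2) :=
      mul_le_mul_of_nonneg_left hb1 (by positivity)
    have k2 : α*s*(1 - (1 - d n)/(1 + d n)) ≤ α*s*(L2 - L1) :=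
      mul_le_mul_of_nonneg_left hb2 (by positivity)
    calc Real.log q ≤ g n := hgn.le
      _ = _ := hgval
      _ ≤ _ := add_le_add k1 k2
  have expand : (L1 - Real.log q)*((n:ℝ)/2 - α*s) + (L2 - Real.log q)*((n:ℝ)/2 + α*s)
      = (n:ℝ)/2 * (L1 + L2) + α*s*(L2 - L1) - n * Real.log q := by ring
  rw [expand]
  linarith [key]
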